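/- Every frame function f on the effects is continuous at the zero operator: for every ε > 0 there is δ > 0 such that any effect E with Hilbert–Schmidt norm |E| < δ has f(E) < ε. -/

import Mathlib

open Matrix Finset ComplexOrder

def IsEffect {d : ℕ} (E : Matrix (Fin d) (Fin d) ℂ) : Prop :=
  E.PosSemidef ∧ (1 - E).PosSemidef

def IsFrameFunction {d : ℕ} (f : Matrix (Fin d) (Fin d) ℂ → ℝ) : Prop :=
  (∀ E, IsEffect E → f E ∈ Set.Icc (0 : ℝ) 1) ∧
  ∀ (n : ℕ) (E : Fin n → Matrix (Fin d) (Fin d) ℂ),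
    (∀ j, IsEffect (E j)) → (∑ j, E j = 1) → ∑ j, f (E j) = 1

noncomputable def hsNorm {d : ℕ} (A : Matrix (Fin d) (Fin d) ℂ) : ℝ :=
  Real.sqrt ((Aᴴ * A).trace.re)

def IsProjection {d : ℕ} (P : Matrix (Fin d) (Fin d) ℂ) : Prop :=
  P.IsHermitian ∧ P * P = P
lemma trace_sq_eq {d : ℕ} {F : Matrix (Fin d) (Fin d) ℂ} (hF : F.PosSemidef) :
    (Fᴴ * F).trace.re = ∑ i, (hF.1.eigenvalues i) ^ 2 := by
  have hH := hF.1
  have hs := hH.spectral_theorem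
  set U : Matrix (Fin d) (Fin d) ℂ := (hH.eigenvectorUnitary : Matrix (Fin d) (Fin d) ℂ) with hU
  set D : Matrix (Fin d) (Fin d) ℂ := diagonal (RCLike.ofReal ∘ hH.eigenvalues) with hD
  have hUU : star U * U = 1 := Matrix.mem_unitaryGroup_iff'.mp hH.eigenvectorUnitary.2
  have h1 : Fᴴ * F = U * (D * D) * star U := by
    rw [hH.eq]
    conv_lhs => rw [hs]
    simp only [Unitary.conjStarAlgAut_apply, Unitary.coe_star, ← hU]
    rw [show U * D * star U * (U * D * star U) = U * D * (star U * U) * (D * star U) by noncomm_ring]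
    rw [hUU]
    noncomm_ring
  rw [h1, Matrix.trace_mul_cycle, ← Matrix.mul_assoc, hUU, Matrix.one_mul]
  rw [hD, Matrix.diagonal_mul_diagonal, Matrix.trace_diagonal]
  simp [← Complex.ofReal_pow, ← Complex.ofReal_sum, sq]

lemma one_sub_psd {d : ℕ} {F : Matrix (Fin d) (Fin d) ℂ} (hF : F.PosSemidef)
    (h : hsNorm F < 1) : (1 - F).PosSemidef := by
  have hH := hF.1
  have htr : (Fᴴ * F).trace.re = ∑ i, (hH.eigenvalues i) ^ 2 := trace_sq_eq hF
  have htr0 : 0 ≤ (Fᴴ * F).trace.re := by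
    rw [htr]; positivity
  have hlt1 : (Fᴴ * F).trace.re < 1 := by
    have := Real.sq_sqrt htr0
    unfold hsNorm at h
    nlinarith [Real.sqrt_nonneg ((Fᴴ * F).trace.re)]
  have heig : ∀ i, hH.eigenvalues i < 1 := by
    intro i
    have h1 : hH.eigenvalues i ^ 2 ≤ ∑ j, (hH.eigenvalues j) ^ 2 :=
      Finset.single_le_sum (f := fun j => hH.eigenvalues j ^ 2) (fun j _ => sq_nonneg _) (Finset.mem_univ i)
    have h0 : 0 ≤ hH.eigenvalues i := hF.eigenvalues_nonneg i
    nlinarith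
  set U : Matrix (Fin d) (Fin d) ℂ := (hH.eigenvectorUnitary : Matrix (Fin d) (Fin d) ℂ) with hU
  have hUU : U * star U = 1 := Matrix.mem_unitaryGroup_iff.mp hH.eigenvectorUnitary.2
  have key : 1 - F = U * (diagonal (fun i => ((1 - hH.eigenvalues i : ℝ) : ℂ))) * star U := by
    conv_lhs => rw [← hUU, hH.spectral_theorem]
    simp only [Unitary.conjStarAlgAut_apply, Unitary.coe_star, ← hU]
    rw [show U * star U = U * 1 * star U by rw [Matrix.mul_one]]
    rw [← Matrix.sub_mul, ← Matrix.mul_sub]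
    congr 1
    rw [← Matrix.diagonal_one, Matrix.diagonal_sub]
    congr 1
    funext i
    simp [Complex.ofReal_sub]
  rw [key]
  have hd : (Matrix.diagonal (fun i => ((1 - hH.eigenvalues i : ℝ) : ℂ))).PosSemidef := by
    rw [Matrix.posSemidef_diagonal_iff]
    intro i
    rw [show ((0:ℂ)) = ((0:ℝ):ℂ) by norm_num, Complex.real_le_real]
    linarith [heig i]
  rw [show star U = Uᴴ from rfl]
  exact hd.mul_mul_conjTranspose_same U

lemma nsmul_psd {d : ℕ} {E : Matrix (Fin d) (Fin d) ℂ} (hE : E.PosSemidef) (N : ℕ) :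
    (((N : ℂ)) • E).PosSemidef := by
  rw [Matrix.posSemidef_iff_dotProduct_mulVec]
  constructor
  · unfold Matrix.IsHermitian
    rw [Matrix.conjTranspose_smul, hE.1.eq]
    simp
  · intro x
    rw [Matrix.smul_mulVec, dotProduct_smul]
    exact smul_nonneg (by positivity) (hE.dotProduct_mulVec_nonneg x)

lemma hsNorm_nsmul {d : ℕ} (E : Matrix (Fin d) (Fin d) ℂ) (N : ℕ) :
    hsNorm (((N : ℂ)) • E) = N * hsNorm E := by
  unfold hsNorm
  rw [Matrix.conjTranspose_smul, Matrix.smul_mul, Matrix.mul_smul, smul_smul]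
  rw [Matrix.trace_smul]
  have : (star (N : ℂ) * (N : ℂ)) = ((N^2 : ℝ) : ℂ) := by
    simp [sq]
  rw [this, smul_eq_mul, Complex.re_ofReal_mul]
  rw [Real.sqrt_mul (sq_nonneg _), Real.sqrt_sq (Nat.cast_nonneg N)]

theorem frame_function_continuous_at_zero {d : ℕ}
    (f : Matrix (Fin d) (Fin d) ℂ → ℝ) (hf : IsFrameFunction f) :
    ∀ ε > (0 : ℝ), ∃ δ > (0 : ℝ),
      ∀ E : Matrix (Fin d) (Fin d) ℂ, IsEffect E → hsNorm E < δ → f E < ε := by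
  intro ε hε
  obtain ⟨N, hN⟩ := exists_nat_gt (1 / ε)
  have hN0 : 0 < (N : ℝ) := lt_trans (by positivity) hN
  refine ⟨1 / N, by positivity, ?_⟩
  intro E hE hEδ
  set G : Matrix (Fin d) (Fin d) ℂ := 1 - (N : ℂ) • E with hGdef
  have hNE : ((N : ℂ) • E).PosSemidef := nsmul_psd hE.1 N
  have hlt : hsNorm ((N : ℂ) • E) < 1 := by
    rw [hsNorm_nsmul]
    calc (N:ℝ) * hsNorm E < N * (1/N) := mul_lt_mul_of_pos_left hEδ hN0
    _ = 1 := by field_simp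
  have hG : G.PosSemidef := one_sub_psd hNE hlt
  have hGeff : IsEffect G := ⟨hG, by rw [hGdef]; simpa using hNE⟩
  set B : Fin (N+1) → Matrix (Fin d) (Fin d) ℂ := Fin.snoc (fun _ => E) G with hB
  have hBe : ∀ j, IsEffect (B j) := by
    intro j
    refine Fin.lastCases ?_ ?_ j
    · simpa [hB, Fin.snoc_last] using hGeff
    · intro i; simpa [hB, Fin.snoc_castSucc] using hE
  have hBsum : ∑ j, B j = 1 := by
    rw [Fin.sum_univ_castSucc]
    simp only [hB, Fin.snoc_castSucc, Fin.snoc_last, Finset.sum_const, Finset.card_univ,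
      Fintype.card_fin]
    rw [hGdef, ← Nat.cast_smul_eq_nsmul ℂ]
    abel
  have hsum := hf.2 (N+1) B hBe hBsum
  rw [Fin.sum_univ_castSucc] at hsum
  simp only [hB, Fin.snoc_castSucc, Fin.snoc_last, Finset.sum_const, Finset.card_univ,
    Fintype.card_fin, nsmul_eq_mul] at hsum
  have hfG : 0 ≤ f G := (hf.1 G hGeff).1
  have h1 : f E ≤ 1 / N := by
    rw [le_div_iff₀ hN0]; nlinarith
  have h2 : 1 / (N:ℝ) < ε := by
    rw [div_lt_iff₀ hN0]
    have := (div_lt_iff₀ hε).mp hN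
    nlinarith
  linarith
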